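/- For every integer n ≥ 1, every permutation π of {1, …, n}, and every j with 1 ≤ j < n: if u_{j+1} is matched by the Ranking greedy process on MonotoneG with permutation π, then u_j is also matched; consequently the set of matched vertices of U is a prefix u_1, …, u_k of U. -/

import Mathlib

open scoped Classical

noncomputable section

/-- The element of `c` minimizing `key`, if `c` is nonempty. -/
def pickMin {n : ℕ} {α : Type*} [LinearOrder α] (key : Fin n → α)
    (c : Finset (Fin n)) : Option (Fin n) :=
  if h : c.Nonempty then some (Classical.choose (Finset.exists_min_image c key h)) else none

/-- The set of matched `V`-vertices after the first `j` arrivals of the online greedy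
process on the bipartite graph with `U`-side arrival order `u_0, u_1, …` and adjacency
`adj`, in which each arriving `u_j` is matched to its currently unmatched neighbor
minimizing `key` (if any). -/
def greedyRun {n : ℕ} {α : Type*} [LinearOrder α] (adj : ℕ → Fin n → Prop)
    (key : Fin n → α) : ℕ → Finset (Fin n)
  | 0 => ∅
  | j + 1 =>
    match pickMin key ((Finset.univ.filter fun i => adj j i) \ greedyRun adj key j) with
    | some v => insert v (greedyRun adj key j)
    | none => greedyRun adj key j

/-- The `V`-vertex that the arriving vertex `u_j` (0-indexed) gets matched to, if any. -/
def greedyMatchU {n : ℕ} {α : Type*} [LinearOrder α] (adj : ℕ → Fin n → Prop)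
    (key : Fin n → α) (j : ℕ) : Option (Fin n) :=
  pickMin key ((Finset.univ.filter fun i => adj j i) \ greedyRun adj key j)

/-- Adjacency of the monotone graph `MonotoneG` (0-indexed):
`u_j` is adjacent to `v_i` iff `j ≤ i`. -/
def monoAdj (n : ℕ) : ℕ → Fin n → Prop := fun j i => j ≤ (i : ℕ)

/-- The set of matched `V`-vertices produced by the Ranking greedy process on `MonotoneG`
with permutation `π` (where `π i` is the rank of `v_i`, 0-indexed). -/
def rankMatched (n : ℕ) (π : Equiv.Perm (Fin n)) : Finset (Fin n) :=
  greedyRun (monoAdj n) (fun i => π i) n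

/-- `x(π)`: the number of edges of the matching produced by Ranking on `MonotoneG`. -/
def xSize (n : ℕ) (π : Equiv.Perm (Fin n)) : ℕ := (rankMatched n π).card

/-- `a(n) = Σ_π x(π)`, over all `n!` permutations. -/
def aVal (n : ℕ) : ℕ := ∑ π : Equiv.Perm (Fin n), xSize n π

/-- `a(n,i)` (with `i` 1-indexed): the number of permutations `π` of `{1,…,n}` for which
the vertex of rank `i` under `π` is matched by the Ranking greedy process on `MonotoneG`. -/
def aIdx (n i : ℕ) : ℕ :=
  (Finset.univ.filter fun π : Equiv.Perm (Fin n) =>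
    ∃ v : Fin n, (π v : ℕ) = i - 1 ∧ v ∈ rankMatched n π).card

/-- `d(m,i)` (with `i` 1-indexed): the number of permutations of `{1,…,m}` all of whose
fixed points (if any) lie among the first `i` items. -/
def dIdx (m i : ℕ) : ℕ :=
  (Finset.univ.filter fun σ : Equiv.Perm (Fin m) => ∀ x, σ x = x → (x : ℕ) < i).card

/-- `d(m)`: the number of derangements of `{1,…,m}`. -/
def numDer (m : ℕ) : ℕ :=
  (Finset.univ.filter fun σ : Equiv.Perm (Fin m) => ∀ x, σ x ≠ x).card

/-- The key for the greedy-by-price process: buy the cheapest available item,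
breaking ties in favor of the smaller index. -/
def priceKey {n : ℕ} (p : Fin n → ℝ) : Fin n → Lex (ℝ × ℕ) := fun i => toLex (p i, (i : ℕ))

/-- The utility `y(u_j)` of buyer `u_j` (0-indexed) in the greedy-by-price process:
`1 - p v` if `u_j` buys item `v`, and `0` if `u_j` remains unmatched. -/
def utility (n : ℕ) (adj : ℕ → Fin n → Prop) (p : Fin n → ℝ) (j : ℕ) : ℝ :=
  (greedyMatchU adj (priceKey p) j).elim 0 (fun v => 1 - p v)

/-- The revenue `r(v)` from item `v` in the greedy-by-price process:
`p v` if `v` is sold, and `0` otherwise. -/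
def revenue (n : ℕ) (adj : ℕ → Fin n → Prop) (p : Fin n → ℝ) (v : Fin n) : ℝ :=
  if v ∈ greedyRun adj (priceKey p) n then p v else 0

/-- The `m`-th harmonic number `H_m = Σ_{i=1}^m 1/i` (with `H_0 = 0`). -/
def harm (m : ℕ) : ℝ := ∑ i ∈ Finset.range m, (1 : ℝ) / (i + 1)

/-- For every `n ≥ 1`, every permutation `π` and every `j` (0-indexed, with `j + 1 < n`):
if `u_{j+1}` is matched by the Ranking greedy process on `MonotoneG` with permutation `π`,
then so is `u_j`; consequently the set of matched vertices of `U` is a prefix of `U`. -/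
lemma pickMin_eq_none_iff {n : ℕ} {α : Type*} [LinearOrder α] (key : Fin n → α)
    (c : Finset (Fin n)) : pickMin key c = none ↔ c = ∅ := by
  unfold pickMin
  split <;> simp_all [← Finset.nonempty_iff_ne_empty]

lemma greedy_step_none {n : ℕ} {α : Type*} [LinearOrder α] (key : Fin n → α) (j : ℕ)
    (h : greedyMatchU (monoAdj n) key j = none) :
    greedyMatchU (monoAdj n) key (j + 1) = none := by
  have hrun : greedyRun (monoAdj n) key (j + 1) = greedyRun (monoAdj n) key j := by
    have h' : pickMin key ((Finset.univ.filter fun i => monoAdj n j i)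
        \ greedyRun (monoAdj n) key j) = none := h
    simp [greedyRun, h']
  rw [greedyMatchU, pickMin_eq_none_iff] at h ⊢
  rw [hrun]
  rw [Finset.eq_empty_iff_forall_notMem] at h ⊢
  intro i hi
  simp only [Finset.mem_sdiff, Finset.mem_filter, Finset.mem_univ, true_and, monoAdj] at hi h
  exact h i ⟨by have h1 := hi.1; simp [Finset.mem_filter, monoAdj] at h1; convert (Finset.mem_filter (p := fun a : Fin n => j ≤ (a : ℕ))).mpr ⟨Finset.mem_univ i, (show j ≤ (i : ℕ) by omega)⟩; exact Finset.filter_congr_decidable _ _ _, hi.2⟩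

lemma greedy_none_mono {n : ℕ} {α : Type*} [LinearOrder α] (key : Fin n → α) {j j' : ℕ}
    (hjj : j ≤ j') (h : greedyMatchU (monoAdj n) key j = none) :
    greedyMatchU (monoAdj n) key j' = none := by
  induction j' with
  | zero => exact Nat.le_zero.mp hjj ▸ h
  | succ m ih =>
    rcases Nat.lt_or_ge j (m+1) with hl | hg
    · exact greedy_step_none key m (ih (Nat.lt_succ_iff.mp hl))
    · have : j = m + 1 := le_antisymm hjj hg
      exact this ▸ h

theorem stmt_12 (n : ℕ) (hn : 1 ≤ n) (π : Equiv.Perm (Fin n)) :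
    (∀ j : ℕ, j + 1 < n →
      greedyMatchU (monoAdj n) (fun i => π i) (j + 1) ≠ none →
      greedyMatchU (monoAdj n) (fun i => π i) j ≠ none) ∧
    (∃ k ≤ n, ∀ j < n, (greedyMatchU (monoAdj n) (fun i => π i) j ≠ none ↔ j < k)) := by
  constructor
  · intro j hj h2 h1
    exact h2 (greedy_step_none _ j h1)
  · by_cases hall : ∀ j < n, greedyMatchU (monoAdj n) (fun i => π i) j ≠ none
    · exact ⟨n, le_rfl, fun j hj => ⟨fun _ => hj, fun _ => hall j hj⟩⟩
    · push_neg at hall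
      obtain ⟨j0, hj0, hnone⟩ := hall
      have hex : ∃ j, greedyMatchU (monoAdj n) (fun i => π i) j = none := ⟨j0, hnone⟩
      refine ⟨Nat.find hex, ?_, ?_⟩
      · exact le_trans (Nat.find_le hnone) (le_of_lt hj0)
      · intro j hj
        constructor
        · intro h
          by_contra hk
          push_neg at hk
          exact h (greedy_none_mono _ hk (Nat.find_spec hex))
        · intro hk
          exact Nat.find_min hex hk
end
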